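/- Let 0 < ε ≤ ρ²/2 and ℓ ≥ 16, and let G = (V,E) be a graph on n vertices (with ρn a positive integer) that is ε-far from having a ρn independent set. Let J ⊆ V be a nonempty set such that G[J] has fewer than (ε/(ℓρ²))·|J|² edges, and let C, D ⊆ V satisfy C ⊆ D, |E(C)| ≤ εn²/4, and |D| ≥ ρn. Suppose that for some r > √ℓ/(16·log(8ρ/ε)) we have |C| ≥ (1 − √ℓ/(16·r·log(8ρ/ε)))·ρn and MRR_G(J,D) ≤ r·(|D| − (1 − √ℓ/(16·r·log(8ρ/ε)))·ρn)/|J|. Then for every Y ⊆ C with |Y| = (1 − √ℓ/(16·r·log(8ρ/ε)))·ρn, the induced subgraph G[D \ Y] has at most (64·(log(8ρ/ε))²·ε·r²/(ℓρ²))·|D \ Y|² edges. -/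

import Mathlib

open Finset

variable {V : Type*}

/-- Number of edges of `G` with both endpoints in `S` (i.e. edges of the induced subgraph `G[S]`). -/
noncomputable def edgesIn (G : SimpleGraph V) (S : Finset V) : ℕ :=
  {e ∈ G.edgeSet | ∀ v ∈ e, v ∈ S}.ncard

/-- Number of edges of `G` with one endpoint in `S` and one endpoint in `T`. -/
noncomputable def edgesBetween (G : SimpleGraph V) (S T : Finset V) : ℕ :=
  {e : Sym2 V | e ∈ G.edgeSet ∧ ∃ u v, e = s(u, v) ∧ u ∈ S ∧ v ∈ T}.ncard

/-- Degree of `v` in the induced subgraph `G[S]`, i.e. `|N(v) ∩ S|`. -/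
noncomputable def degIn (G : SimpleGraph V) (S : Finset V) (v : V) : ℕ :=
  ((S : Set V) ∩ G.neighborSet v).ncard

/-- `S_{↑v}`: the vertices of `S` with strictly more neighbours in `S` than `v` has. -/
def upSet (G : SimpleGraph V) (S : Finset V) (v : V) : Set V :=
  {u | u ∈ S ∧ degIn G S v < degIn G S u}

/-- The maximum removal ratio `MRR_G(J, C)` with parameters `ε, ρ, ℓ`. -/
noncomputable def MRR [DecidableEq V] (G : SimpleGraph V) (ε ρ ℓ : ℝ) (J C : Finset V) : ℝ :=
  sSup {x : ℝ | ∃ v ∈ J, x = max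
    ((degIn G (insert v C) v : ℝ) /
      max (degIn G J v : ℝ) (ε / (Real.sqrt ℓ * ρ ^ 2) * J.card))
    (((upSet G C v).ncard : ℝ) /
      max (((upSet G C v) ∩ (J : Set V)).ncard : ℝ) (ε / (Real.sqrt ℓ * ρ ^ 2) * J.card))}

/-- `G` is `ε`-far from having a `ρn` independent set: every set of `ρn` vertices
spans at least `ε n²` edges. -/
def FarFrom (G : SimpleGraph V) [Fintype V] (ρ ε : ℝ) : Prop :=
  ∀ U : Finset V, (U.card : ℝ) = ρ * Fintype.card V →
    ε * (Fintype.card V : ℝ) ^ 2 ≤ (edgesIn G U : ℝ)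

/- ############ auxiliary lemmas ############ -/

lemma degIn_mono' (G : SimpleGraph V) {S T : Finset V} (h : S ⊆ T) (v : V) :
    degIn G S v ≤ degIn G T v :=
  Set.ncard_le_ncard (Set.inter_subset_inter_left _ (Finset.coe_subset.mpr h))
    (T.finite_toSet.inter_of_left _)

lemma degIn_le_card' (G : SimpleGraph V) (S : Finset V) (v : V) :
    degIn G S v ≤ S.card := by
  rw [← Set.ncard_coe_finset S]
  exact Set.ncard_le_ncard Set.inter_subset_left S.finite_toSet

lemma degIn_insert' [DecidableEq V] (G : SimpleGraph V) (D : Finset V) (v : V) :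
    degIn G (insert v D) v = degIn G D v := by
  unfold degIn
  rw [Finset.coe_insert, Set.insert_inter_of_notMem]
  simp [SimpleGraph.mem_neighborSet]

lemma edgesIn_empty' (G : SimpleGraph V) : edgesIn G (∅ : Finset V) = 0 := by
  unfold edgesIn
  convert Set.ncard_empty (Sym2 V)
  ext e
  simp only [Set.mem_setOf_eq, Set.mem_empty_iff_false, iff_false, not_and]
  intro _ hall
  induction e using Sym2.ind with
  | _ x y => exact absurd (hall x (by simp)) (by simp)

lemma sum_degIn' [DecidableEq V] (G : SimpleGraph V) (S : Finset V) :
    ∑ v ∈ S, degIn G S v = 2 * edgesIn G S := by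
  classical
  let G' : SimpleGraph ↥S := G.comap (fun x => (x : V))
  haveI : DecidableRel G'.Adj := fun a b => Classical.dec _
  have hdeg : ∀ x : ↥S, G'.degree x = degIn G S (x : V) := by
    intro x
    have himg : (fun y : ↥S => (y : V)) '' (G'.neighborSet x)
        = (S : Set V) ∩ G.neighborSet (x : V) := by
      ext u
      constructor
      · rintro ⟨w, hw, rfl⟩
        exact ⟨w.2, hw⟩
      · rintro ⟨hu, hadj⟩
        exact ⟨⟨u, hu⟩, hadj, rfl⟩
    have h1 : degIn G S (x : V) = (G'.neighborSet x).ncard := by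
      unfold degIn
      rw [← himg, Set.ncard_image_of_injective _ Subtype.val_injective]
    rw [h1, Set.ncard_eq_toFinset_card', Set.toFinset_card,
      SimpleGraph.card_neighborSet_eq_degree]
  have hedge : edgesIn G S = G'.edgeFinset.card := by
    have himg : Sym2.map (fun y : ↥S => (y : V)) '' G'.edgeSet
        = {e ∈ G.edgeSet | ∀ v ∈ e, v ∈ S} := by
      ext e
      constructor
      · rintro ⟨e', he', rfl⟩
        induction e' using Sym2.ind with
        | _ a b =>
          rw [SimpleGraph.mem_edgeSet] at he'
          refine ⟨?_, ?_⟩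
          · rw [Sym2.map_pair_eq, SimpleGraph.mem_edgeSet]; exact he'
          · intro v hv
            rw [Sym2.map_pair_eq, Sym2.mem_iff] at hv
            rcases hv with rfl | rfl
            · exact a.2
            · exact b.2
      · rintro ⟨he, hS⟩
        induction e using Sym2.ind with
        | _ x y =>
          have hx : x ∈ S := hS x (Sym2.mem_mk_left x y)
          have hy : y ∈ S := hS y (Sym2.mem_mk_right x y)
          refine ⟨s(⟨x, hx⟩, ⟨y, hy⟩), ?_, by rw [Sym2.map_pair_eq]⟩
          rw [SimpleGraph.mem_edgeSet] at he ⊢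
          exact he
    unfold edgesIn
    rw [← himg, Set.ncard_image_of_injective _ (Sym2.map.injective Subtype.val_injective),
      Set.ncard_eq_toFinset_card', Set.toFinset_card]
    convert (SimpleGraph.edgeFinset_card (G := G')).symm
  calc ∑ v ∈ S, degIn G S v = ∑ x ∈ S.attach, degIn G S (x : V) := (Finset.sum_attach S _).symm
    _ = ∑ x : ↥S, G'.degree x := by
        rw [Finset.univ_eq_attach]
        exact Finset.sum_congr rfl fun x _ => (hdeg x).symm
    _ = 2 * G'.edgeFinset.card := SimpleGraph.sum_degrees_eq_twice_card_edges G'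
    _ = 2 * edgesIn G S := by rw [hedge]

lemma layer_min' (T : ℝ) (hT : 0 ≤ T) (d : ℝ) :
    ∀ I : ℕ, min ((2:ℝ)^I * T) d
      ≤ T + ∑ i ∈ Finset.range I, (if (2:ℝ)^i * T < d then (2:ℝ)^i * T else 0) := by
  intro I
  induction I with
  | zero => simpa using min_le_left T d
  | succ I ih =>
    rw [Finset.sum_range_succ]
    have hpow : (0:ℝ) ≤ (2:ℝ)^I * T := mul_nonneg (by positivity) hT
    by_cases h : (2:ℝ)^I * T < d
    · rw [if_pos h]
      have hmin : min ((2:ℝ)^I * T) d = (2:ℝ)^I * T := min_eq_left h.le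
      have h1 : (2:ℝ)^I * T ≤ T + ∑ i ∈ Finset.range I,
          (if (2:ℝ)^i * T < d then (2:ℝ)^i * T else 0) := hmin ▸ ih
      have h2 : min ((2:ℝ)^(I+1) * T) d ≤ (2:ℝ)^(I+1) * T := min_le_left _ _
      have h3 : (2:ℝ)^(I+1) * T = (2:ℝ)^I * T + (2:ℝ)^I * T := by ring
      linarith
    · rw [if_neg h]
      push_neg at h
      have h2 : min ((2:ℝ)^(I+1) * T) d = d := by
        apply min_eq_right
        calc d ≤ (2:ℝ)^I * T := h
          _ ≤ (2:ℝ)^(I+1) * T := by rw [pow_succ]; linarith [hpow]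
      have h3 : min ((2:ℝ)^I * T) d = d := min_eq_right h
      rw [h2, add_zero]
      rw [h3] at ih
      exact ih

lemma aux_twoL (L : ℝ) (hL : 4 ≤ L) : 2 * L ≤ (2:ℝ)^(L-1) := by
  have h8 : (2:ℝ)^(L-1) = 8 * (2:ℝ)^(L-4) := by
    rw [show L - 1 = 3 + (L-4) by ring, Real.rpow_add two_pos]
    have h3 : (2:ℝ)^(3:ℝ) = 8 := by
      rw [show (3:ℝ) = ((3:ℕ):ℝ) by norm_num, Real.rpow_natCast]
      norm_num
    rw [h3]
  have hlog : (1/2:ℝ) ≤ Real.log 2 := by linarith [Real.log_two_gt_d9]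
  have hexp : 1 + (L-4) * (1/2) ≤ (2:ℝ)^(L-4) := by
    rw [Real.rpow_def_of_pos two_pos]
    have h := Real.add_one_le_exp (Real.log 2 * (L-4))
    nlinarith [h, hlog, hL]
  rw [h8]
  linarith [hexp]

/- ############ main theorem ############ -/

set_option maxHeartbeats 4000000 in
theorem sparse_outside_revision [Fintype V] [DecidableEq V]
    (G : SimpleGraph V) (ε ρ ℓ r : ℝ) (n : ℕ)
    (hn : n = Fintype.card V) (hε : 0 < ε) (hερ : ε ≤ ρ ^ 2 / 2) (hℓ : ℓ ≥ 16)
    (hρn : ∃ m : ℕ, 0 < m ∧ (m : ℝ) = ρ * n)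
    (hfar : FarFrom G ρ ε)
    (J : Finset V) (hJne : J.Nonempty)
    (hJ : (edgesIn G J : ℝ) < ε / (ℓ * ρ ^ 2) * (J.card : ℝ) ^ 2)
    (C D : Finset V) (hCD : C ⊆ D)
    (hEC : (edgesIn G C : ℝ) ≤ ε * (n : ℝ) ^ 2 / 4)
    (hD : (D.card : ℝ) ≥ ρ * n)
    (hr : r > Real.sqrt ℓ / (16 * Real.logb 2 (8 * ρ / ε)))
    (hC : (C.card : ℝ) ≥ (1 - Real.sqrt ℓ / (16 * r * Real.logb 2 (8 * ρ / ε))) * (ρ * n))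
    (hMRR : MRR G ε ρ ℓ J D ≤
      r * ((D.card : ℝ) - (1 - Real.sqrt ℓ / (16 * r * Real.logb 2 (8 * ρ / ε))) * (ρ * n))
        / J.card) :
    ∀ Y : Finset V, Y ⊆ C →
      (Y.card : ℝ) = (1 - Real.sqrt ℓ / (16 * r * Real.logb 2 (8 * ρ / ε))) * (ρ * n) →
      (edgesIn G (D \ Y) : ℝ) ≤
        64 * (Real.logb 2 (8 * ρ / ε)) ^ 2 * ε * r ^ 2 / (ℓ * ρ ^ 2) *
          ((D \ Y).card : ℝ) ^ 2 := by
  intro Y hYC hYcard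
  classical
  have hYD : Y ⊆ D := hYC.trans hCD
  set L : ℝ := Real.logb 2 (8 * ρ / ε) with hLdef
  -- ### basic positivity facts ###
  obtain ⟨m₀, hm₀pos, hm₀⟩ := hρn
  have hn0 : 0 < n := by
    rcases Nat.eq_zero_or_pos n with h | h
    · exfalso
      rw [h] at hm₀
      simp only [Nat.cast_zero, mul_zero] at hm₀
      exact absurd hm₀ (by exact_mod_cast hm₀pos.ne')
    · exact h
  have hnR : (1:ℝ) ≤ (n:ℝ) := by exact_mod_cast hn0
  have hρ0 : 0 < ρ := by
    have h1 : (0:ℝ) < (m₀:ℝ) := by exact_mod_cast hm₀pos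
    rw [hm₀] at h1
    nlinarith only [h1, hnR]
  have hρ1 : ρ ≤ 1 := by
    have h1 : (D.card : ℝ) ≤ (n:ℝ) := by
      rw [hn]
      exact_mod_cast (Finset.card_le_univ D).trans_eq (Finset.card_univ)
    nlinarith only [hD, h1, hnR, hρ0]
  have h16 : (16:ℝ) ≤ 8 * ρ / ε := by
    rw [le_div_iff₀ hε]
    nlinarith only [hερ, hρ0, hρ1, hε]
  have hL4 : (4:ℝ) ≤ L := by
    have hlb : Real.logb 2 16 ≤ L := by
      rw [hLdef]
      exact (Real.logb_le_logb (by norm_num) (by norm_num) (by linarith)).mpr h16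
    have h4 : Real.logb 2 16 = 4 := by
      rw [show (16:ℝ) = (2:ℝ)^(4:ℝ) by
        rw [show (4:ℝ) = ((4:ℕ):ℝ) by norm_num, Real.rpow_natCast]; norm_num]
      exact Real.logb_rpow (by norm_num) (by norm_num)
    linarith
  have hL0 : (0:ℝ) < L := by linarith only [hL4]
  have hℓ0 : (0:ℝ) < ℓ := by linarith only [hℓ]
  have hsq4 : (4:ℝ) ≤ Real.sqrt ℓ := by
    have : (4:ℝ) = Real.sqrt 16 := by
      rw [show (16:ℝ) = 4^2 by norm_num, Real.sqrt_sq (by norm_num : (0:ℝ) ≤ 4)]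
    rw [this]
    exact Real.sqrt_le_sqrt hℓ
  have hsq0 : (0:ℝ) < Real.sqrt ℓ := by linarith only [hsq4]
  have hsqsq : Real.sqrt ℓ * Real.sqrt ℓ = ℓ := Real.mul_self_sqrt hℓ0.le
  have hr0 : 0 < r := lt_trans (div_pos hsq0 (by positivity)) hr
  have hrsq : Real.sqrt ℓ < r * (16 * L) :=
    (div_lt_iff₀ (by linarith only [hL4] : (0:ℝ) < 16 * L)).mp hr
  have hJ1 : (1:ℝ) ≤ (J.card:ℝ) := by exact_mod_cast hJne.card_pos
  have hJ0 : (0:ℝ) < (J.card:ℝ) := by linarith only [hJ1]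
  set m : ℕ := (D \ Y).card with hmdef
  -- ### trivial case : D \ Y empty ###
  rcases Nat.eq_zero_or_pos m with hm0 | hm1
  · have hDY : D \ Y = ∅ := Finset.card_eq_zero.mp hm0
    rw [hm0, hDY, edgesIn_empty']
    simp
  -- ### main case ###
  have hmR : (1:ℝ) ≤ (m:ℝ) := by exact_mod_cast hm1
  have hm0R : (0:ℝ) < (m:ℝ) := by linarith only [hmR]
  set K : ℝ := r * (m:ℝ) / (J.card:ℝ) with hKdef
  have hK0 : 0 < K := by
    rw [hKdef]
    exact div_pos (mul_pos hr0 hm0R) hJ0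
  have hYle : Y.card ≤ D.card := Finset.card_le_card hYD
  have hmcast : (m:ℝ) = (D.card:ℝ) - (Y.card:ℝ) := by
    rw [hmdef, Finset.card_sdiff_of_subset hYD, Nat.cast_sub hYle]
  have hMRRK : MRR G ε ρ ℓ J D ≤ K := by
    rw [hKdef, hmcast, hYcard]
    exact hMRR
  -- ### extract the two MRR components ###
  unfold MRR at hMRRK
  have hfK : ∀ v ∈ J, max
      ((degIn G (insert v D) v : ℝ) /
        max (degIn G J v : ℝ) (ε / (Real.sqrt ℓ * ρ ^ 2) * J.card))
      (((upSet G D v).ncard : ℝ) /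
        max (((upSet G D v) ∩ (J : Set V)).ncard : ℝ) (ε / (Real.sqrt ℓ * ρ ^ 2) * J.card))
      ≤ K := by
    intro v hv
    refine le_trans (le_csSup ?_ ?_) hMRRK
    · have heq : {x : ℝ | ∃ v ∈ J, x = max
          ((degIn G (insert v D) v : ℝ) /
            max (degIn G J v : ℝ) (ε / (Real.sqrt ℓ * ρ ^ 2) * J.card))
          (((upSet G D v).ncard : ℝ) /
            max (((upSet G D v) ∩ (J : Set V)).ncard : ℝ)
              (ε / (Real.sqrt ℓ * ρ ^ 2) * J.card))}
          = (fun v => max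
          ((degIn G (insert v D) v : ℝ) /
            max (degIn G J v : ℝ) (ε / (Real.sqrt ℓ * ρ ^ 2) * J.card))
          (((upSet G D v).ncard : ℝ) /
            max (((upSet G D v) ∩ (J : Set V)).ncard : ℝ)
              (ε / (Real.sqrt ℓ * ρ ^ 2) * J.card))) '' ↑J := by
        ext x
        constructor
        · rintro ⟨w, hw, rfl⟩
          exact ⟨w, hw, rfl⟩
        · rintro ⟨w, hw, rfl⟩
          exact ⟨w, hw, rfl⟩
      rw [heq]
      exact (J.finite_toSet.image _).bddAbove
    · exact ⟨v, hv, rfl⟩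
  have hden0 : (0:ℝ) < ε / (Real.sqrt ℓ * ρ ^ 2) * J.card :=
    mul_pos (div_pos hε (mul_pos hsq0 (pow_pos hρ0 2))) hJ0
  have hA : ∀ v ∈ J, (degIn G D v : ℝ)
      ≤ K * max (degIn G J v : ℝ) (ε / (Real.sqrt ℓ * ρ ^ 2) * J.card) := by
    intro v hv
    have h1 := le_trans (le_max_left _ _) (hfK v hv)
    have hden : (0:ℝ) < max (degIn G J v : ℝ) (ε / (Real.sqrt ℓ * ρ ^ 2) * J.card) :=
      lt_max_of_lt_right hden0
    rw [div_le_iff₀ hden] at h1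
    rw [degIn_insert'] at h1
    linarith only [h1]
  have hB : ∀ v ∈ J, ((upSet G D v).ncard : ℝ)
      ≤ K * max (((upSet G D v) ∩ (J : Set V)).ncard : ℝ)
          (ε / (Real.sqrt ℓ * ρ ^ 2) * J.card) := by
    intro v hv
    have h1 := le_trans (le_max_right _ _) (hfK v hv)
    have hden : (0:ℝ) < max (((upSet G D v) ∩ (J : Set V)).ncard : ℝ)
        (ε / (Real.sqrt ℓ * ρ ^ 2) * J.card) := lt_max_of_lt_right hden0
    rw [div_le_iff₀ hden] at h1
    linarith only [h1]
  -- ### abbreviation a ###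
  set a : ℝ := ε / (Real.sqrt ℓ * ρ ^ 2) with hadef
  have ha0 : 0 < a := div_pos hε (mul_pos hsq0 (pow_pos hρ0 2))
  have hJcne : (J.card:ℝ) ≠ 0 := ne_of_gt hJ0
  have hKJ : K * (J.card:ℝ) = r * (m:ℝ) := by
    rw [hKdef, div_mul_cancel₀ _ hJcne]
  have haJ : K * (a * (J.card:ℝ)) = a * r * (m:ℝ) := by
    have h1 : K * (a * (J.card:ℝ)) = a * (K * (J.card:ℝ)) := by ring
    rw [h1, hKJ]
    ring
  have haℓ : a / Real.sqrt ℓ = ε / (ℓ * ρ ^ 2) := by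
    rw [hadef, div_div, show Real.sqrt ℓ * ρ ^ 2 * Real.sqrt ℓ
      = (Real.sqrt ℓ * Real.sqrt ℓ) * ρ ^ 2 by ring, hsqsq]
  -- ### J is sparse : degree sum bound ###
  have hsumJ : ∑ v ∈ J, (degIn G J v : ℝ) ≤ 2 * (a / Real.sqrt ℓ) * (J.card:ℝ)^2 := by
    have h1 : ∑ v ∈ J, (degIn G J v : ℝ) = ((2 * edgesIn G J : ℕ) : ℝ) := by
      rw [← sum_degIn' G J]
      push_cast
      ring
    rw [h1, haℓ]
    push_cast
    linarith only [hJ]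
  -- ### a J-vertex of small D-degree ###
  have hv0 : ∃ v₀ ∈ J, (degIn G D v₀ : ℝ) ≤ a * r * (m:ℝ) := by
    obtain ⟨v₀, hv₀J, hv₀min⟩ := J.exists_min_image (fun v => degIn G J v) hJne
    have hmin : (J.card:ℝ) * (degIn G J v₀ : ℝ) ≤ ∑ v ∈ J, (degIn G J v : ℝ) := by
      calc (J.card:ℝ) * (degIn G J v₀ : ℝ) = ∑ _v ∈ J, (degIn G J v₀ : ℝ) := by
            rw [Finset.sum_const, nsmul_eq_mul]
        _ ≤ ∑ v ∈ J, (degIn G J v : ℝ) :=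
            Finset.sum_le_sum fun v hv => by exact_mod_cast hv₀min v hv
    have hdiv : a / Real.sqrt ℓ ≤ a / 4 :=
      div_le_div_of_nonneg_left ha0.le (by norm_num) hsq4
    have hd0 : (degIn G J v₀ : ℝ) ≤ a * (J.card:ℝ) := by
      by_contra hcon
      push_neg at hcon
      have h5 : (J.card:ℝ) * (a * (J.card:ℝ)) < (J.card:ℝ) * (degIn G J v₀ : ℝ) :=
        mul_lt_mul_of_pos_left hcon hJ0
      have h6 : (a / Real.sqrt ℓ) * (J.card:ℝ)^2 ≤ (a / 4) * (J.card:ℝ)^2 :=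
        mul_le_mul_of_nonneg_right hdiv (sq_nonneg _)
      have h7 : (J.card:ℝ) * (a * (J.card:ℝ)) = a * (J.card:ℝ)^2 := by ring
      have h8 : (0:ℝ) ≤ a * (J.card:ℝ)^2 := mul_nonneg ha0.le (sq_nonneg _)
      linarith only [h5, h6, h7, h8, hmin, hsumJ]
    have hAv := hA v₀ hv₀J
    rw [max_eq_right hd0, haJ] at hAv
    exact ⟨v₀, hv₀J, hAv⟩
  -- ### the counting bound ###
  have hcount : ∀ t : ℝ, a * r * (m:ℝ) ≤ t →
      ((D.filter (fun u => t < (degIn G D u : ℝ))).card : ℝ) * t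
        ≤ 2 * a * r^2 * (m:ℝ)^2 / Real.sqrt ℓ + a * r * (m:ℝ) * t := by
    intro t ht
    have ht0 : 0 < t := lt_of_lt_of_le (mul_pos (mul_pos ha0 hr0) hm0R) ht
    obtain ⟨v₀, hv₀J, hv₀⟩ := hv0
    have hne : (J.filter (fun v => (degIn G D v : ℝ) ≤ t)).Nonempty :=
      ⟨v₀, Finset.mem_filter.mpr ⟨hv₀J, le_trans hv₀ ht⟩⟩
    obtain ⟨w, hwmem, hwmax⟩ := Finset.exists_max_image _ (fun v => degIn G D v) hne
    have hwJ : w ∈ J := (Finset.mem_filter.mp hwmem).1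
    have hwt : (degIn G D w : ℝ) ≤ t := (Finset.mem_filter.mp hwmem).2
    -- high-degree vertices of D lie in upSet G D w
    have hsub : ((D.filter (fun u => t < (degIn G D u : ℝ))) : Set V) ⊆ upSet G D w := by
      intro u hu
      simp only [Finset.coe_filter, Set.mem_setOf_eq] at hu
      refine ⟨hu.1, ?_⟩
      exact_mod_cast lt_of_le_of_lt hwt hu.2
    have hupfin : (upSet G D w).Finite :=
      Set.Finite.subset D.finite_toSet (fun u hu => hu.1)
    have hcard1 : ((D.filter (fun u => t < (degIn G D u : ℝ))).card : ℝ)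
        ≤ ((upSet G D w).ncard : ℝ) := by
      have := Set.ncard_le_ncard hsub hupfin
      rw [Set.ncard_coe_finset] at this
      exact_mod_cast this
    -- upSet ∩ J consists of high-degree J-vertices
    have hsub2 : (upSet G D w) ∩ (J : Set V)
        ⊆ ((J.filter (fun u => t < (degIn G D u : ℝ))) : Set V) := by
      rintro u ⟨⟨huD, hlt⟩, huJ⟩
      simp only [Finset.coe_filter, Set.mem_setOf_eq]
      refine ⟨huJ, ?_⟩
      by_contra hle
      push_neg at hle
      have hmem : u ∈ J.filter (fun v => (degIn G D v : ℝ) ≤ t) :=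
        Finset.mem_filter.mpr ⟨huJ, hle⟩
      exact absurd (hwmax u hmem) (not_le.mpr hlt)
    have hcard2 : (((upSet G D w) ∩ (J : Set V)).ncard : ℝ)
        ≤ ((J.filter (fun u => t < (degIn G D u : ℝ))).card : ℝ) := by
      have := Set.ncard_le_ncard hsub2 (J.filter _).finite_toSet
      rw [Set.ncard_coe_finset] at this
      exact_mod_cast this
    -- Markov bound for high-degree J-vertices
    have hHJ : ((J.filter (fun u => t < (degIn G D u : ℝ))).card : ℝ) * t
        ≤ K * (2 * (a / Real.sqrt ℓ) * (J.card:ℝ)^2) := by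
      have hstep : ∀ u ∈ J.filter (fun u => t < (degIn G D u : ℝ)),
          t ≤ K * (degIn G J u : ℝ) := by
        intro u hu
        obtain ⟨huJ, hut⟩ := Finset.mem_filter.mp hu
        have hAu := hA u huJ
        have h5 : t < K * max (degIn G J u : ℝ) (a * (J.card:ℝ)) :=
          lt_of_lt_of_le hut hAu
        rcases max_cases (degIn G J u : ℝ) (a * (J.card:ℝ)) with ⟨heq, _⟩ | ⟨heq, _⟩
        · rw [heq] at h5; exact h5.le
        · rw [heq, haJ] at h5
          exact absurd (lt_of_lt_of_le h5 ht) (lt_irrefl t)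
      calc ((J.filter (fun u => t < (degIn G D u : ℝ))).card : ℝ) * t
          = ∑ _u ∈ J.filter (fun u => t < (degIn G D u : ℝ)), t := by
            rw [Finset.sum_const, nsmul_eq_mul]
        _ ≤ ∑ u ∈ J.filter (fun u => t < (degIn G D u : ℝ)), K * (degIn G J u : ℝ) :=
            Finset.sum_le_sum hstep
        _ ≤ ∑ u ∈ J, K * (degIn G J u : ℝ) :=
            Finset.sum_le_sum_of_subset_of_nonneg (Finset.filter_subset _ _)
              (fun u _ _ => mul_nonneg hK0.le (Nat.cast_nonneg _))
        _ = K * ∑ u ∈ J, (degIn G J u : ℝ) := by rw [Finset.mul_sum]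
        _ ≤ K * (2 * (a / Real.sqrt ℓ) * (J.card:ℝ)^2) :=
            mul_le_mul_of_nonneg_left hsumJ hK0.le
    -- combine
    have hBw := hB w hwJ
    have hmax_le : max (((upSet G D w) ∩ (J : Set V)).ncard : ℝ) (a * (J.card:ℝ))
        ≤ ((J.filter (fun u => t < (degIn G D u : ℝ))).card : ℝ) + a * (J.card:ℝ) := by
      apply max_le
      · linarith only [hcard2, hden0]
      · have : (0:ℝ) ≤ ((J.filter (fun u => t < (degIn G D u : ℝ))).card : ℝ) :=
          Nat.cast_nonneg _
        linarith only [this]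
    have hNt : ((D.filter (fun u => t < (degIn G D u : ℝ))).card : ℝ)
        ≤ K * ((J.filter (fun u => t < (degIn G D u : ℝ))).card : ℝ) + a * r * (m:ℝ) := by
      calc ((D.filter (fun u => t < (degIn G D u : ℝ))).card : ℝ)
          ≤ ((upSet G D w).ncard : ℝ) := hcard1
        _ ≤ K * max (((upSet G D w) ∩ (J : Set V)).ncard : ℝ) (a * (J.card:ℝ)) := hBw
        _ ≤ K * (((J.filter (fun u => t < (degIn G D u : ℝ))).card : ℝ) + a * (J.card:ℝ)) :=
            mul_le_mul_of_nonneg_left hmax_le hK0.le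
        _ = K * ((J.filter (fun u => t < (degIn G D u : ℝ))).card : ℝ) + a * r * (m:ℝ) := by
            rw [mul_add, haJ]
    have hKsq : K * (K * (2 * (a / Real.sqrt ℓ) * (J.card:ℝ)^2))
        = 2 * a * r^2 * (m:ℝ)^2 / Real.sqrt ℓ := by
      have : K * (K * (2 * (a / Real.sqrt ℓ) * (J.card:ℝ)^2))
          = 2 * a * (K * (J.card:ℝ))^2 / Real.sqrt ℓ := by ring
      rw [this, hKJ]
      ring
    calc ((D.filter (fun u => t < (degIn G D u : ℝ))).card : ℝ) * t
        ≤ (K * ((J.filter (fun u => t < (degIn G D u : ℝ))).card : ℝ) + a * r * (m:ℝ)) * t :=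
          mul_le_mul_of_nonneg_right hNt ht0.le
      _ = K * (((J.filter (fun u => t < (degIn G D u : ℝ))).card : ℝ) * t) + a * r * (m:ℝ) * t := by
          ring
      _ ≤ K * (K * (2 * (a / Real.sqrt ℓ) * (J.card:ℝ)^2)) + a * r * (m:ℝ) * t := by
          have := mul_le_mul_of_nonneg_left hHJ hK0.le
          linarith only [this]
      _ = 2 * a * r^2 * (m:ℝ)^2 / Real.sqrt ℓ + a * r * (m:ℝ) * t := by rw [hKsq]
  -- ### choice of the number of dyadic levels ###
  have har0 : 0 < a * r := mul_pos ha0 hr0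
  have hpowL : (2:ℝ)^(L:ℝ) = 8 * ρ / ε := by
    rw [hLdef]
    exact Real.rpow_logb two_pos (by norm_num) (div_pos (by linarith only [hρ0]) hε)
  have hIex : ∃ I : ℕ, (1:ℝ) ≤ 2^I * (a*r) ∧ ((2:ℝ)^I - 1) * (a*r) ≤ 2 ∧ (I:ℝ) ≤ 2*L := by
    by_cases har : 1 ≤ a * r
    · exact ⟨0, by simpa using har, by norm_num, by push_cast; linarith only [hL0]⟩
    · push_neg at har
      have hex : ∃ k : ℕ, 1/(a*r) < 2^k := pow_unbounded_of_one_lt (1/(a*r)) one_lt_two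
      set I := Nat.find hex with hIdef
      have hfind : 1/(a*r) < 2^I := Nat.find_spec hex
      have hI1 : (1:ℝ) ≤ 2^I * (a*r) := by
        rw [div_lt_iff₀ har0] at hfind
        linarith only [hfind]
      have hIpos : I ≠ 0 := by
        intro h0
        rw [h0, pow_zero] at hfind
        have : 1 < 1/(a*r) := one_lt_one_div har0 har
        linarith only [this, hfind]
      have hmin : ¬(1/(a*r) < 2^(I-1)) :=
        Nat.find_min hex (Nat.pred_lt hIpos)
      push_neg at hmin
      have h2I : (2:ℝ)^I = 2^(I-1) * 2 := by
        rw [← pow_succ, Nat.sub_add_cancel (Nat.one_le_iff_ne_zero.mpr hIpos)]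
      have hI2 : ((2:ℝ)^I - 1) * (a*r) ≤ 2 := by
        have h1 : (2:ℝ)^(I-1) * (a*r) ≤ 1 := by
          have := mul_le_mul_of_nonneg_right hmin har0.le
          rw [div_mul_cancel₀ 1 (ne_of_gt har0)] at this
          exact this
        have h2 : (2:ℝ)^I * (a*r) ≤ 2 := by
          rw [h2I]
          linarith only [h1]
        linarith only [h2, har0]
      have hI3 : (I:ℝ) ≤ 2*L := by
        -- 2^(I-1) ≤ 1/(a r) < 2 L 2^L ≤ 2^(2L - 1)
        have s1 : ε / (16*L*ρ^2) < a * r := by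
          have heq : a * (Real.sqrt ℓ / (16*L)) = ε / (16*L*ρ^2) := by
            rw [hadef, div_mul_div_comm, show ε * Real.sqrt ℓ = Real.sqrt ℓ * ε by ring,
              show Real.sqrt ℓ * ρ^2 * (16*L) = Real.sqrt ℓ * (16*L*ρ^2) by ring,
              mul_div_mul_left _ _ (ne_of_gt hsq0)]
          have := mul_lt_mul_of_pos_left hr ha0
          rw [heq] at this
          exact this
        have hpos2L : (0:ℝ) < 2*L*(2:ℝ)^(L:ℝ) := by
          have h2l := Real.rpow_pos_of_pos two_pos (L:ℝ)
          nlinarith only [mul_pos hL0 h2l]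
        have hden2 : (0:ℝ) < 16*L*ρ^2 := by
          have h0 : (0:ℝ) < 16*L := by linarith only [hL0]
          exact mul_pos h0 (pow_pos hρ0 2)
        have s3 : 1/(2*L*(2:ℝ)^(L:ℝ)) ≤ ε / (16*L*ρ^2) := by
          rw [div_le_div_iff₀ hpos2L hden2, hpowL, one_mul,
            show ε * (2*L*(8*ρ/ε)) = (2*L*8*ρ)*(ε/ε) by ring,
            div_self (ne_of_gt hε)]
          have hρρ : ρ^2 ≤ ρ := by nlinarith only [hρ0, hρ1]
          have h0L : (0:ℝ) ≤ 16*L := by linarith only [hL0]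
          calc 16*L*ρ^2 ≤ 16*L*ρ := by nlinarith only [mul_le_mul_of_nonneg_left hρρ h0L]
            _ = 2*L*8*ρ*1 := by ring
        have s4 : 1/(a*r) < 2*L*(2:ℝ)^(L:ℝ) := by
          have h5 : 1/(2*L*(2:ℝ)^(L:ℝ)) < a*r := lt_of_le_of_lt s3 s1
          have := one_div_lt_one_div_of_lt (one_div_pos.mpr hpos2L) h5
          rwa [one_div_one_div] at this
        have s5 : 2*L*(2:ℝ)^(L:ℝ) ≤ (2:ℝ)^(2*L-1) := by
          have h6 := aux_twoL L hL4
          have h7 : (2:ℝ)^(L-1) * (2:ℝ)^(L:ℝ) = (2:ℝ)^(2*L-1) := by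
            rw [← Real.rpow_add two_pos]
            ring_nf
          calc 2*L*(2:ℝ)^(L:ℝ) ≤ (2:ℝ)^(L-1) * (2:ℝ)^(L:ℝ) :=
              mul_le_mul_of_nonneg_right h6 (Real.rpow_pos_of_pos two_pos _).le
            _ = (2:ℝ)^(2*L-1) := h7
        have hch : (2:ℝ)^(((I-1:ℕ)):ℝ) < (2:ℝ)^(2*L-1) := by
          rw [Real.rpow_natCast]
          calc (2:ℝ)^(I-1:ℕ) ≤ 1/(a*r) := hmin
            _ < 2*L*(2:ℝ)^(L:ℝ) := s4
            _ ≤ (2:ℝ)^(2*L-1) := s5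
        have h8 : (((I-1:ℕ)):ℝ) < 2*L-1 :=
          (Real.rpow_lt_rpow_left_iff one_lt_two).mp hch
        have h9 : (((I-1:ℕ)):ℝ) = (I:ℝ) - 1 := by
          rw [Nat.cast_sub (Nat.one_le_iff_ne_zero.mpr hIpos)]
          simp
        rw [h9] at h8
        linarith only [h8, hL0]
      exact ⟨I, hI1, hI2, hI3⟩
  obtain ⟨I, hI1, hI2, hI3⟩ := hIex
  set T : ℝ := a * r * (m:ℝ) with hTdef
  have hT0 : 0 < T := by
    rw [hTdef]; exact mul_pos (mul_pos ha0 hr0) hm0R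
  -- ### per-vertex layering bound ###
  have hperu : ∀ u ∈ D \ Y, (degIn G (D \ Y) u : ℝ)
      ≤ T + ∑ i ∈ Finset.range I,
        (if (2:ℝ)^i * T < (degIn G D u : ℝ) then (2:ℝ)^i * T else 0) := by
    intro u hu
    refine le_trans (le_min ?_ ?_) (layer_min' T hT0.le _ I)
    · have hd : (degIn G (D \ Y) u : ℝ) ≤ (m:ℝ) := by
        have := degIn_le_card' G (D \ Y) u
        rw [← hmdef] at this
        exact_mod_cast this
      have h2 : (m:ℝ) ≤ (2:ℝ)^I * T := by
        rw [hTdef]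
        have := mul_le_mul_of_nonneg_right hI1 hm0R.le
        linarith only [this]
      linarith only [hd, h2]
    · exact_mod_cast degIn_mono' G Finset.sdiff_subset u
  -- ### summing up ###
  have hinner : ∀ i : ℕ,
      ∑ u ∈ D \ Y, (if (2:ℝ)^i * T < (degIn G D u : ℝ) then (2:ℝ)^i * T else 0)
        ≤ 2 * a * r^2 * (m:ℝ)^2 / Real.sqrt ℓ + a * r * (m:ℝ) * ((2:ℝ)^i * T) := by
    intro i
    have hone : (1:ℝ) ≤ (2:ℝ)^i := one_le_pow₀ one_le_two
    have hti : a * r * (m:ℝ) ≤ (2:ℝ)^i * T := by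
      rw [hTdef]
      have harm : (0:ℝ) ≤ a * r * (m:ℝ) :=
        mul_nonneg (mul_nonneg ha0.le hr0.le) hm0R.le
      have := mul_le_mul_of_nonneg_right hone harm
      linarith only [this]
    have heq : ∑ u ∈ D \ Y, (if (2:ℝ)^i * T < (degIn G D u : ℝ) then (2:ℝ)^i * T else 0)
        = (((D \ Y).filter (fun u => (2:ℝ)^i * T < (degIn G D u : ℝ))).card : ℝ)
          * ((2:ℝ)^i * T) := by
      rw [← Finset.sum_filter, Finset.sum_const, nsmul_eq_mul]
    rw [heq]
    have hle : ((((D \ Y).filter (fun u => (2:ℝ)^i * T < (degIn G D u : ℝ))).card : ℝ))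
        ≤ ((D.filter (fun u => (2:ℝ)^i * T < (degIn G D u : ℝ))).card : ℝ) := by
      exact_mod_cast Finset.card_le_card
        (Finset.filter_subset_filter _ Finset.sdiff_subset)
    have hc := hcount ((2:ℝ)^i * T) hti
    have ht0' : (0:ℝ) ≤ (2:ℝ)^i * T := mul_nonneg (by positivity) hT0.le
    calc (((D \ Y).filter (fun u => (2:ℝ)^i * T < (degIn G D u : ℝ))).card : ℝ)
        * ((2:ℝ)^i * T)
        ≤ ((D.filter (fun u => (2:ℝ)^i * T < (degIn G D u : ℝ))).card : ℝ)
          * ((2:ℝ)^i * T) := mul_le_mul_of_nonneg_right hle ht0'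
      _ ≤ 2 * a * r^2 * (m:ℝ)^2 / Real.sqrt ℓ + a * r * (m:ℝ) * ((2:ℝ)^i * T) := hc
  have hgeom : ∑ i ∈ Finset.range I, (2:ℝ)^i = 2^I - 1 := by
    rw [geom_sum_eq (by norm_num : (2:ℝ) ≠ 1)]
    norm_num
  have hsummed : ∑ u ∈ D \ Y, (degIn G (D \ Y) u : ℝ)
      ≤ (m:ℝ) * T + ((I:ℝ) * (2 * a * r^2 * (m:ℝ)^2 / Real.sqrt ℓ)
          + a * r * (m:ℝ) * T * ((2:ℝ)^I - 1)) := by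
    calc ∑ u ∈ D \ Y, (degIn G (D \ Y) u : ℝ)
        ≤ ∑ u ∈ D \ Y, (T + ∑ i ∈ Finset.range I,
            (if (2:ℝ)^i * T < (degIn G D u : ℝ) then (2:ℝ)^i * T else 0)) :=
          Finset.sum_le_sum hperu
      _ = (m:ℝ) * T + ∑ i ∈ Finset.range I, ∑ u ∈ D \ Y,
            (if (2:ℝ)^i * T < (degIn G D u : ℝ) then (2:ℝ)^i * T else 0) := by
          rw [Finset.sum_add_distrib, Finset.sum_const, nsmul_eq_mul, ← hmdef,
            Finset.sum_comm]
      _ ≤ (m:ℝ) * T + ∑ i ∈ Finset.range I,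
            (2 * a * r^2 * (m:ℝ)^2 / Real.sqrt ℓ + a * r * (m:ℝ) * ((2:ℝ)^i * T)) := by
          have := Finset.sum_le_sum (fun i (_ : i ∈ Finset.range I) => hinner i)
          linarith only [this]
      _ = (m:ℝ) * T + ((I:ℝ) * (2 * a * r^2 * (m:ℝ)^2 / Real.sqrt ℓ)
            + a * r * (m:ℝ) * T * ((2:ℝ)^I - 1)) := by
          rw [Finset.sum_add_distrib, Finset.sum_const, Finset.card_range, nsmul_eq_mul]
          have h1 : ∑ i ∈ Finset.range I, a * r * (m:ℝ) * ((2:ℝ)^i * T)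
              = a * r * (m:ℝ) * T * ∑ i ∈ Finset.range I, (2:ℝ)^i := by
            rw [Finset.mul_sum]
            exact Finset.sum_congr rfl fun i _ => by ring
          rw [h1, hgeom]
  -- ### handshake ###
  have hhs : ∑ u ∈ D \ Y, (degIn G (D \ Y) u : ℝ) = 2 * (edgesIn G (D \ Y) : ℝ) := by
    exact_mod_cast sum_degIn' G (D \ Y)
  rw [hhs] at hsummed
  -- ### final arithmetic ###
  have harm0 : (0:ℝ) ≤ a * r * (m:ℝ)^2 :=
    mul_nonneg (mul_nonneg ha0.le hr0.le) (by positivity)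
  have hq0 : (0:ℝ) ≤ a * r^2 * (m:ℝ)^2 / Real.sqrt ℓ := by
    apply div_nonneg _ hsq0.le
    exact mul_nonneg (mul_nonneg ha0.le (sq_nonneg r)) (by positivity)
  have e1 : (m:ℝ) * T = a * r * (m:ℝ)^2 := by rw [hTdef]; ring
  have e2 : a * r * (m:ℝ) * T * ((2:ℝ)^I - 1)
      = ((2:ℝ)^I - 1) * (a*r) * (a * r * (m:ℝ)^2) := by rw [hTdef]; ring
  have t1 : (I:ℝ) * (2 * a * r^2 * (m:ℝ)^2 / Real.sqrt ℓ)
      ≤ 2*L * (2 * a * r^2 * (m:ℝ)^2 / Real.sqrt ℓ) := by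
    apply mul_le_mul_of_nonneg_right hI3
    have : 2 * a * r^2 * (m:ℝ)^2 / Real.sqrt ℓ = 2 * (a * r^2 * (m:ℝ)^2 / Real.sqrt ℓ) := by
      ring
    rw [this]
    linarith only [hq0]
  have t2 : ((2:ℝ)^I - 1) * (a*r) * (a * r * (m:ℝ)^2) ≤ 2 * (a * r * (m:ℝ)^2) :=
    mul_le_mul_of_nonneg_right hI2 harm0
  have hfin1 : 2 * (edgesIn G (D \ Y) : ℝ)
      ≤ 3 * (a * r * (m:ℝ)^2) + 4*L * (a * r^2 * (m:ℝ)^2 / Real.sqrt ℓ) := by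
    have h0 : 2*L * (2 * a * r^2 * (m:ℝ)^2 / Real.sqrt ℓ)
        = 4*L * (a * r^2 * (m:ℝ)^2 / Real.sqrt ℓ) := by ring
    rw [e1, e2] at hsummed
    linarith only [hsummed, t1, t2, h0]
  have b1 : a * r * (m:ℝ)^2 ≤ 16*L * (a * r^2 * (m:ℝ)^2 / Real.sqrt ℓ) := by
    rw [show 16*L * (a * r^2 * (m:ℝ)^2 / Real.sqrt ℓ)
        = 16*L*a*r^2*(m:ℝ)^2 / Real.sqrt ℓ by ring, le_div_iff₀ hsq0]
    linarith only [mul_le_mul_of_nonneg_left hrsq.le harm0]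
  have hfin2 : 2 * (edgesIn G (D \ Y) : ℝ) ≤ 52*L * (a * r^2 * (m:ℝ)^2 / Real.sqrt ℓ) := by
    linarith only [hfin1, b1]
  have hql : a * r^2 * (m:ℝ)^2 / Real.sqrt ℓ = ε / (ℓ * ρ^2) * r^2 * (m:ℝ)^2 := by
    have h1 : a * r^2 * (m:ℝ)^2 / Real.sqrt ℓ = (a / Real.sqrt ℓ) * (r^2 * (m:ℝ)^2) := by
      ring
    rw [h1, haℓ]
    ring
  rw [hql] at hfin2
  have hnn : (0:ℝ) ≤ ε / (ℓ * ρ^2) * r^2 * (m:ℝ)^2 := by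
    apply mul_nonneg (mul_nonneg _ (sq_nonneg r)) (by positivity)
    exact div_nonneg hε.le (mul_nonneg hℓ0.le (sq_nonneg ρ))
  have hLL : 52*L ≤ 128*L^2 := by nlinarith only [hL4, sq_nonneg (L-4)]
  have hfin3 : 52*L * (ε / (ℓ * ρ^2) * r^2 * (m:ℝ)^2)
      ≤ 2 * (64 * L^2 * ε * r^2 / (ℓ * ρ^2) * (m:ℝ)^2) := by
    calc 52*L * (ε / (ℓ * ρ^2) * r^2 * (m:ℝ)^2)
        ≤ 128*L^2 * (ε / (ℓ * ρ^2) * r^2 * (m:ℝ)^2) :=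
          mul_le_mul_of_nonneg_right hLL hnn
      _ = 2 * (64 * L^2 * ε * r^2 / (ℓ * ρ^2) * (m:ℝ)^2) := by ring
  linarith only [hfin2, hfin3]
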